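/- (Self-connected node merging, Theorem 1, abstract form.) Let α be a type, let s be an equivalence relation (Setoid) on α, and let A B ⊆ α be sets each contained in a single equivalence class of s (i.e., all elements of A are pairwise s-equivalent, and all elements of B are pairwise s-equivalent). Let R ⊆ A × B be a nonempty set of pairs and let (u₀, v₀) ∈ R. Then the equivalence relation generated by s together with the single pair (u₀, v₀) equals the equivalence relation generated by s together with all pairs in R. Hence, when two self-connected KD-tree nodes each lie inside a single proto-feature, merging one neighboring pair between them is equivalent to visiting and merging all neighboring pairs. -/

import Mathlib

/-- Self-connected node merging (abstract form): if `A` and `B` each lie in a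
single equivalence class of the equivalence relation `s`, and `R` is a
nonempty set of pairs drawn from `A × B` containing `(u₀, v₀)`, then the
equivalence relation generated by `s` together with the single pair `(u₀, v₀)`
equals the one generated by `s` together with all pairs of `R`: merging one
neighboring pair between two self-connected nodes is equivalent to visiting
and merging all pairs. -/
theorem merge_one_pair_suffices {α : Type*} (s : Setoid α) (A B : Set α)
    (hA : ∀ a ∈ A, ∀ a' ∈ A, s.r a a') (hB : ∀ b ∈ B, ∀ b' ∈ B, s.r b b')
    (R : Set (α × α)) (hR : ∀ p ∈ R, p.1 ∈ A ∧ p.2 ∈ B)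
    (u₀ v₀ : α) (h₀ : (u₀, v₀) ∈ R) :
    ∀ x y : α,
      Relation.EqvGen (fun a b => s.r a b ∨ (a, b) = (u₀, v₀)) x y ↔
        Relation.EqvGen (fun a b => s.r a b ∨ (a, b) ∈ R) x y := by
  intro x y
  constructor
  · refine fun h => Relation.EqvGen.mono ?_ _ _ h
    rintro a b (hs | he)
    · exact Or.inl hs
    · cases he; exact Or.inr h₀
  · intro h
    induction h with
    | rel a b hab =>
      rcases hab with hs | hmem
      · exact Relation.EqvGen.rel _ _ (Or.inl hs)
      · have hab' := hR _ hmem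
        have h0' := hR _ h₀
        refine Relation.EqvGen.trans _ _ _
          (Relation.EqvGen.rel _ _ (Or.inl (hA _ hab'.1 _ h0'.1)))
          (Relation.EqvGen.trans _ _ _ (Relation.EqvGen.rel _ _ (Or.inr rfl))
            (Relation.EqvGen.rel _ _ (Or.inl (hB _ h0'.2 _ hab'.2))))
    | refl a => exact Relation.EqvGen.refl a
    | symm a b _ ih => exact Relation.EqvGen.symm _ _ ih
    | trans a b c _ _ ih1 ih2 => exact Relation.EqvGen.trans _ _ _ ih1 ih2
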